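/- Let V ∈ L^∞, R_h = 1/(2h), v_n = (n+1/2)π/R_h for n ∈ ℤ, and define the infinite matrix A(x) = ((π/R_h)·V_w^{R_h}(x, v_n − v_m))_{n,m∈ℤ} where V_w^{R_h}(x,v) = (i/2π)∫_{B(0,R_h)} D_V(x,y)e^{ivy}dy. Then A(x) defines a bounded linear operator on ℓ²(ℤ) with ‖A(x)‖ ≤ 2‖V‖_{L^∞}, uniformly in x and h. -/

import Mathlib

open MeasureTheory Real Complex

/-- The truncated Wigner potential
`V_w^R(x,v) = (i/2π) ∫_{B(0,R)} (V(x+y/2)−V(x−y/2)) e^{ivy} dy`. -/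
noncomputable def VwR (V : ℝ → ℝ) (R x v : ℝ) : ℂ :=
  (Complex.I / (2 * π)) * ∫ y in Set.Ioo (-R) R,
    ((V (x + y / 2) - V (x - y / 2) : ℝ) : ℂ) * Complex.exp (Complex.I * v * y)

open scoped InnerProductSpace ENNReal

lemma measurable_liftIoc_aux {T a : ℝ} [hT : Fact (0 < T)] {f : ℝ → ℂ} (hf : Measurable f) :
    Measurable (AddCircle.liftIoc T a f) :=
  (hf.comp measurable_subtype_coe).comp (AddCircle.measurableEquivIoc T a).measurable

lemma liftIoc_apply_aux {T a : ℝ} [hT : Fact (0 < T)] (f : ℝ → ℂ) (z : AddCircle T) :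
    AddCircle.liftIoc T a f z = f ((AddCircle.equivIoc T a z : ℝ)) := rfl

lemma fourierCoeff_lift_eq {R : ℝ} (hR0 : 0 < R) (D₂ : ℝ → ℂ) (k : ℤ) [Fact (0 < 2*π)] :
    fourierCoeff (AddCircle.liftIoc (2*π) (-π) fun θ => Complex.I * D₂ (-(R/π) * θ)) k
      = ((π : ℂ)/(R : ℂ)) * ((Complex.I / (2 * (π:ℂ))) *
          ∫ y in Set.Ioo (-R) R, D₂ y * Complex.exp (Complex.I * ((k * π / R : ℝ) : ℂ) * y)) := by
  have hπ := Real.pi_pos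
  have hπ' : (π:ℂ) ≠ 0 := by exact_mod_cast hπ.ne'
  have hR' : (R:ℂ) ≠ 0 := by exact_mod_cast hR0.ne'
  set H : ℝ → ℂ := fun y => Complex.I * (D₂ y * Complex.exp (Complex.I * ((k * π / R : ℝ) : ℂ) * y)) with hH
  rw [fourierCoeff_liftIoc_eq, fourierCoeffOn_eq_integral]
  have h1 : (∫ θ in (-π)..(-π + 2*π),
        fourier (-k) (θ : AddCircle ((-π + 2*π) - (-π))) • (Complex.I * D₂ (-(R/π) * θ)))
      = ∫ θ in (-π)..(-π + 2*π), H (-(R/π) * θ) := by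
    refine intervalIntegral.integral_congr fun θ _ => ?_
    rw [smul_eq_mul, fourier_coe_apply, hH]
    have harg : 2 * (π:ℂ) * Complex.I * ((-k : ℤ):ℂ) * (θ:ℂ) / (((-π + 2*π) - (-π) : ℝ):ℂ)
        = Complex.I * ((k * π / R : ℝ):ℂ) * ((-(R/π) * θ : ℝ):ℂ) := by
      push_cast
      field_simp
      ring
    rw [harg]
    push_cast
    ring
  have hc0 : -(R/π) ≠ 0 := by
    have : 0 < R/π := div_pos hR0 hπ
    simpa using this.ne'
  have h2 : (∫ θ in (-π)..(-π + 2*π), H (-(R/π) * θ))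
      = (-(R/π))⁻¹ • ∫ y in (-(R/π)) * (-π)..(-(R/π)) * (-π + 2*π), H y :=
    intervalIntegral.integral_comp_mul_left H hc0
  have e1 : -(R/π) * (-π) = R := by field_simp
  have e2 : -(R/π) * (-π + 2*π) = -R := by
    have hp : -π + 2*π = π := by ring
    rw [hp, neg_mul, div_mul_cancel₀ R hπ.ne']
  have h3 : (∫ y in R..(-R), H y) = - ∫ y in (-R)..R, H y := by
    rw [← intervalIntegral.integral_symm]
  have h4 : (∫ y in (-R)..R, H y)
      = Complex.I * ∫ y in (-R)..R, D₂ y * Complex.exp (Complex.I * ((k * π / R : ℝ) : ℂ) * y) := by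
    rw [hH]
    exact intervalIntegral.integral_const_mul _ _
  have h5 : (∫ y in (-R)..R, D₂ y * Complex.exp (Complex.I * ((k * π / R : ℝ) : ℂ) * y))
      = ∫ y in Set.Ioo (-R) R, D₂ y * Complex.exp (Complex.I * ((k * π / R : ℝ) : ℂ) * y) := by
    rw [intervalIntegral.integral_of_le (by linarith), integral_Ioc_eq_integral_Ioo]
  rw [h1, h2, e1, e2, h3, h4, h5]
  set J := ∫ y in Set.Ioo (-R) R, D₂ y * Complex.exp (Complex.I * ((k * π / R : ℝ) : ℂ) * y)
  rw [smul_comm]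
  simp only [Complex.real_smul, smul_eq_mul]
  push_cast
  have hRR : ((R:ℂ)/(π:ℂ)) ≠ 0 := div_ne_zero hR' hπ'
  field_simp
  ring

/-- The infinite matrix `A(x) = ((π/R_h) V_w^{R_h}(x, v_n − v_m))_{n,m}` built on the
shifted sampling points `v_n = (n+1/2)π/R_h` defines a bounded operator on `ℓ²(ℤ)`
with norm at most `2‖V‖_{L^∞}`, uniformly in `x` and `h`. -/
theorem matrix_A_bounded (V : ℝ → ℝ) (M : ℝ) (hM : 0 ≤ M) (hV : ∀ t, |V t| ≤ M)
    (h : ℝ) (hh : 0 < h) (R : ℝ) (hR : R = 1 / (2 * h)) (x : ℝ) :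
    ∀ e : ℤ → ℂ,
      ∑' n : ℤ, ENNReal.ofReal
          (‖∑' m : ℤ, (π / R) * VwR V R x (((n - m : ℤ)) * π / R) * e m‖ ^ 2)
        ≤ ENNReal.ofReal ((2 * M) ^ 2) * ∑' m : ℤ, ENNReal.ofReal (‖e m‖ ^ 2) := by
  intro e
  have hπ : (0:ℝ) < π := Real.pi_pos
  have hR0 : 0 < R := by rw [hR]; positivity
  set D : ℝ → ℝ := fun y => V (x + y/2) - V (x - y/2) with hDdef
  have hDb : ∀ y, |D y| ≤ 2 * M := by
    intro y
    calc |D y| ≤ |V (x + y/2)| + |V (x - y/2)| := abs_sub _ _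
    _ ≤ M + M := add_le_add (hV _) (hV _)
    _ = 2*M := by ring
  by_cases HM : AEStronglyMeasurable (fun y => (D y : ℂ)) (volume.restrict (Set.Ioo (-R) R))
  swap
  · -- junk case : all integrals are zero
    have hzero : ∀ v : ℝ, VwR V R x v = 0 := by
      intro v
      have hni : ¬ Integrable (fun y => ((V (x + y / 2) - V (x - y / 2) : ℝ) : ℂ) *
          Complex.exp (Complex.I * v * y)) (volume.restrict (Set.Ioo (-R) R)) := by
        intro hInt
        apply HM
        have h1 : AEStronglyMeasurable (fun y : ℝ => ((D y : ℂ)) * Complex.exp (Complex.I * v * y) *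
            Complex.exp (-(Complex.I * v * y))) (volume.restrict (Set.Ioo (-R) R)) :=
          hInt.aestronglyMeasurable.mul
            ((Complex.continuous_exp.comp (by continuity)).aestronglyMeasurable)
        have h2 : (fun y : ℝ => ((D y : ℂ)) * Complex.exp (Complex.I * v * y) *
            Complex.exp (-(Complex.I * v * y))) = fun y : ℝ => (D y : ℂ) := by
          funext y
          rw [mul_assoc, ← Complex.exp_add, add_neg_cancel, Complex.exp_zero, mul_one]
        rwa [h2] at h1
      unfold VwR
      rw [integral_undef hni, mul_zero]
    simp only [hzero, mul_zero, zero_mul, tsum_zero, norm_zero]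
    simp
  by_cases HM0 : M = 0
  · -- V is identically zero
    have hzero : ∀ v : ℝ, VwR V R x v = 0 := by
      intro v
      have hV0 : ∀ t, V t = 0 := fun t =>
        abs_eq_zero.mp (le_antisymm (HM0 ▸ hV t) (abs_nonneg _))
      unfold VwR
      have : ∀ y : ℝ, ((V (x + y / 2) - V (x - y / 2) : ℝ) : ℂ) *
          Complex.exp (Complex.I * v * y) = 0 := by
        intro y; rw [hV0, hV0]; simp
      simp only [this, integral_zero, mul_zero]
    simp only [hzero, mul_zero, zero_mul, tsum_zero, norm_zero]
    simp
  have hMpos : 0 < M := lt_of_le_of_ne hM (Ne.symm HM0)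
  by_cases He : Summable (fun m : ℤ => ‖e m‖^2)
  swap
  · -- right-hand side is infinite
    have htop : (∑' m : ℤ, ENNReal.ofReal (‖e m‖^2)) = ⊤ := by
      by_contra hne
      apply He
      have h1 := ENNReal.summable_toReal hne
      have h2 : ∀ m : ℤ, (ENNReal.ofReal (‖e m‖^2)).toReal = ‖e m‖^2 := by
        intro m; exact ENNReal.toReal_ofReal (by positivity)
      simpa only [h2] using h1
    rw [htop, ENNReal.mul_top (by
      simp only [ne_eq, ENNReal.ofReal_eq_zero, not_le]
      positivity)]
    exact le_top
  -- main case
  obtain ⟨D₁, hD₁sm, hD₁eq⟩ := HM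
  set D₂ : ℝ → ℂ := fun y => if ‖D₁ y‖ ≤ 2*M then D₁ y else 0 with hD₂def
  have hD₂m : Measurable D₂ :=
    Measurable.ite (measurableSet_le hD₁sm.measurable.norm measurable_const)
      hD₁sm.measurable measurable_const
  have hD₂b : ∀ y, ‖D₂ y‖ ≤ 2*M := by
    intro y
    by_cases hy : ‖D₁ y‖ ≤ 2*M
    · simp only [hD₂def, if_pos hy]; exact hy
    · simp only [hD₂def, if_neg hy, norm_zero]; positivity
  have hD₂eq : (fun y => ((D y : ℝ) : ℂ)) =ᶠ[ae (volume.restrict (Set.Ioo (-R) R))] D₂ := by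
    filter_upwards [hD₁eq] with y hy
    have hb : ‖D₁ y‖ ≤ 2*M := by
      rw [← hy]
      simpa [Complex.norm_real, Real.norm_eq_abs] using hDb y
    simp only [hD₂def, if_pos hb]
    exact hy
  haveI : Fact (0 < 2*π) := ⟨by positivity⟩
  set g₀ : ℝ → ℂ := fun θ => Complex.I * D₂ (-(R/π) * θ) with hg₀def
  set g : AddCircle (2*π) → ℂ := AddCircle.liftIoc (2*π) (-π) g₀ with hgdef
  have hgm : Measurable g := by
    rw [hgdef]
    exact measurable_liftIoc_aux (measurable_const.mul (hD₂m.comp (measurable_const_mul _)))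
  have hgb : ∀ z, ‖g z‖ ≤ 2*M := by
    intro z
    rw [hgdef, liftIoc_apply_aux, hg₀def]
    rw [norm_mul, Complex.norm_I, one_mul]
    exact hD₂b _
  have hc : ∀ k : ℤ, ((π:ℂ) / (R:ℂ)) * VwR V R x (k * π / R) = fourierCoeff g k := by
    intro k
    rw [hgdef, hg₀def, fourierCoeff_lift_eq hR0 D₂ k]
    unfold VwR
    congr 2
    refine integral_congr_ae ?_
    filter_upwards [hD₂eq] with y hy
    have hy' : ((V (x + y / 2) - V (x - y / 2) : ℝ) : ℂ) = D₂ y := hy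
    rw [hy']
  -- ℓ² and L² setup
  have hE : Memℓp e 2 := by
    refine memℓp_gen ?_
    have h2 : (fun m : ℤ => ‖e m‖ ^ (2:ℝ≥0∞).toReal) = fun m : ℤ => ‖e m‖ ^ (2:ℕ) := by
      funext m
      rw [ENNReal.toReal_ofNat]
      rw [show ((2:ℝ)) = ((2:ℕ):ℝ) by norm_num, Real.rpow_natCast]
    rw [h2]
    exact He
  set E := (⟨e, hE⟩ : lp (fun _ : ℤ => ℂ) 2) with hEdef
  set F : Lp ℂ 2 (@AddCircle.haarAddCircle (2*π) _) := fourierBasis.repr.symm E with hFdef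
  have hFrepr : fourierBasis.repr F = E := fourierBasis.repr.apply_symm_apply E
  set P : AddCircle (2*π) → ℂ := fun t => g t * F t with hPdef
  have hPm : AEStronglyMeasurable P AddCircle.haarAddCircle :=
    hgm.aestronglyMeasurable.mul (Lp.aestronglyMeasurable F)
  have hPmem : MemLp P 2 AddCircle.haarAddCircle := by
    refine MemLp.of_le_mul (c := 2*M) (Lp.memLp F) hPm (Filter.Eventually.of_forall fun t => ?_)
    rw [hPdef]
    rw [norm_mul]
    exact mul_le_mul_of_nonneg_right (hgb t) (norm_nonneg _)
  set Plp : Lp ℂ 2 (@AddCircle.haarAddCircle (2*π) _) := hPmem.toLp P with hPlpdef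
  have key : ∀ n : ℤ, (∑' m : ℤ, (π:ℂ) / (R:ℂ) * VwR V R x (((n - m : ℤ)) * π / R) * e m)
      = fourierCoeff (⇑Plp) n := by
    intro n
    set h₀ : AddCircle (2*π) → ℂ := fun t => (starRingEnd ℂ) (fourier (-n) t * g t) with hh₀def
    have hh₀m : AEStronglyMeasurable h₀ AddCircle.haarAddCircle :=
      continuous_star.comp_aestronglyMeasurable
        ((map_continuous (fourier (-n))).aestronglyMeasurable.mul hgm.aestronglyMeasurable)
    have hh₀mem : MemLp h₀ 2 AddCircle.haarAddCircle := by
      refine MemLp.of_bound hh₀m (2*M) (Filter.Eventually.of_forall fun t => ?_)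
      rw [hh₀def]
      simp only [RCLike.norm_conj, norm_mul]
      have h1 : ‖fourier (-n) t‖ = 1 := Circle.norm_coe _
      rw [h1, one_mul]
      exact hgb t
    set Hh : Lp ℂ 2 (@AddCircle.haarAddCircle (2*π) _) := hh₀mem.toLp h₀ with hHhdef
    have A1 : ∀ m : ℤ, (⟪Hh, fourierBasis m⟫_ℂ) = fourierCoeff g (n - m) := by
      intro m
      have hb : (fourierBasis (T := 2*π) m) = fourierLp 2 m := by
        rw [← coe_fourierBasis]
      rw [hb, MeasureTheory.L2.inner_def]
      have : fourierCoeff g (n - m) = ∫ t, fourier (-(n - m)) t • g t ∂AddCircle.haarAddCircle := rfl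
      rw [this]
      refine integral_congr_ae ?_
      filter_upwards [hh₀mem.coeFn_toLp, coeFn_fourierLp 2 m] with t h1 h2
      rw [h1, h2, hh₀def]
      simp only [RCLike.inner_apply, RingHomCompTriple.comp_apply, RingHom.id_apply,
        Complex.conj_conj, smul_eq_mul, starRingEnd_apply, star_star]
      have h3 : (-(n - m)) = (-n) + m := by ring
      rw [h3, fourier_add]
      ring
    have A2 : ∀ m : ℤ, (⟪fourierBasis m, F⟫_ℂ) = e m := by
      intro m
      rw [← HilbertBasis.repr_apply_apply, hFrepr]
    have A3 : (⟪Hh, F⟫_ℂ) = fourierCoeff (⇑Plp) n := by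
      rw [MeasureTheory.L2.inner_def]
      have : fourierCoeff (⇑Plp) n = ∫ t, fourier (-n) t • Plp t ∂AddCircle.haarAddCircle := rfl
      rw [this]
      refine integral_congr_ae ?_
      filter_upwards [hh₀mem.coeFn_toLp, hPmem.coeFn_toLp] with t h1 h2
      rw [h1, h2, hh₀def, hPdef]
      simp only [RCLike.inner_apply, smul_eq_mul, starRingEnd_apply, star_star]
      ring
    calc (∑' m : ℤ, (π:ℂ) / (R:ℂ) * VwR V R x (((n - m : ℤ)) * π / R) * e m)
        = ∑' m : ℤ, (⟪Hh, fourierBasis m⟫_ℂ) * (⟪fourierBasis m, F⟫_ℂ) := by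
          refine tsum_congr fun m => ?_
          rw [A1 m, A2 m, ← hc (n - m)]
      _ = ⟪Hh, F⟫_ℂ := fourierBasis.tsum_inner_mul_inner Hh F
      _ = fourierCoeff (⇑Plp) n := A3
  have hpow : ∀ r : ℝ, r ^ ((2:ℝ≥0∞)).toReal = r ^ (2:ℕ) := fun r => by
    rw [ENNReal.toReal_ofNat, ← Nat.cast_ofNat (R := ℝ) (n := 2), Real.rpow_natCast]
  have hsum : Summable fun i : ℤ => ‖fourierCoeff (⇑Plp) i‖^2 := by
    have h1 := Memℓp.summable (by norm_num) (lp.memℓp (fourierBasis.repr Plp))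
    simp only [hpow, fourierBasis_repr] at h1
    exact h1
  have hFint : Integrable (fun t => ‖(F : AddCircle (2*π) → ℂ) t‖^2) AddCircle.haarAddCircle := by
    have h1 := (Lp.memLp F).integrable_norm_rpow two_ne_zero ENNReal.ofNat_ne_top
    simp only [hpow] at h1
    exact h1
  have hFnorm : (∫ t, ‖(F : AddCircle (2*π) → ℂ) t‖^2 ∂AddCircle.haarAddCircle)
      = ∑' m : ℤ, ‖e m‖^2 := by
    rw [← tsum_sq_fourierCoeff F]
    refine tsum_congr fun m => ?_
    congr 1
    rw [← fourierBasis_repr, hFrepr]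
  have hint : (∫ t, ‖(⇑Plp) t‖^2 ∂AddCircle.haarAddCircle)
      ≤ (2*M)^2 * ∑' m : ℤ, ‖e m‖^2 := by
    rw [← hFnorm, ← MeasureTheory.integral_const_mul]
    refine integral_mono_of_nonneg (Filter.Eventually.of_forall fun t => by positivity)
      (hFint.const_mul _) ?_
    filter_upwards [hPmem.coeFn_toLp] with t ht
    rw [ht, hPdef]
    calc ‖g t * (F : AddCircle (2*π) → ℂ) t‖^2
        = (‖g t‖ * ‖(F : AddCircle (2*π) → ℂ) t‖)^2 := by rw [norm_mul]
      _ ≤ (2*M * ‖(F : AddCircle (2*π) → ℂ) t‖)^2 := by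
          have hle := mul_le_mul_of_nonneg_right (hgb t)
            (norm_nonneg ((F : AddCircle (2*π) → ℂ) t))
          exact pow_le_pow_left₀ (by positivity) hle 2
      _ = (2*M)^2 * ‖(F : AddCircle (2*π) → ℂ) t‖^2 := by ring
  calc (∑' n : ℤ, ENNReal.ofReal
          (‖∑' m : ℤ, (π:ℂ)/(R:ℂ) * VwR V R x (((n - m : ℤ)) * π / R) * e m‖^2))
      = ∑' n : ℤ, ENNReal.ofReal (‖fourierCoeff (⇑Plp) n‖^2) := by
        refine tsum_congr fun n => ?_
        rw [key n]
    _ = ENNReal.ofReal (∑' n : ℤ, ‖fourierCoeff (⇑Plp) n‖^2) :=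
        (ENNReal.ofReal_tsum_of_nonneg (fun n => by positivity) hsum).symm
    _ = ENNReal.ofReal (∫ t, ‖(⇑Plp) t‖^2 ∂AddCircle.haarAddCircle) := by
        rw [tsum_sq_fourierCoeff Plp]
    _ ≤ ENNReal.ofReal ((2*M)^2 * ∑' m : ℤ, ‖e m‖^2) := ENNReal.ofReal_le_ofReal hint
    _ = ENNReal.ofReal ((2*M)^2) * ENNReal.ofReal (∑' m : ℤ, ‖e m‖^2) :=
        ENNReal.ofReal_mul (by positivity)
    _ = ENNReal.ofReal ((2*M)^2) * ∑' m : ℤ, ENNReal.ofReal (‖e m‖^2) := by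
        rw [ENNReal.ofReal_tsum_of_nonneg (fun m => by positivity) He]
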